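/- Let S be a semidomain. If S[x] is atomic (every nonzero nonunit of S[x] is a product of irreducibles), then the Laurent polynomial semidomain S[x^{±1}] is atomic. -/

import Mathlib

open Polynomial

/-- A witness that the commutative semiring `S` embeds into an integral domain. -/
structure SemidomainWitness (S : Type) [CommSemiring S] : Type 1 where
  R : Type
  [commRing : CommRing R]
  [isDomain : IsDomain R]
  f : S →+* R
  inj : Function.Injective f

/-- A semidomain is a commutative semiring that embeds into an integral domain. -/
def IsSemidomain (S : Type) [CommSemiring S] : Prop :=
  Nonempty (SemidomainWitness S)


/-- A commutative monoid with zero is atomic if every nonzero nonunit is a finite product of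
irreducible elements. -/
def Atomic (M : Type) [CommMonoidWithZero M] : Prop :=
  ∀ a : M, a ≠ 0 → ¬ IsUnit a → ∃ l : Multiset M, (∀ b ∈ l, Irreducible b) ∧ l.prod = a

section Aux

variable {S : Type} [CommSemiring S]

/-- Cancellation in `S[X]` via the embedding into a polynomial ring over a domain. -/
theorem polyCancel (W : SemidomainWitness S) (a b c : Polynomial S) (ha : a ≠ 0)
    (h : a * b = a * c) : b = c := by
  letI := W.commRing
  letI := W.isDomain
  have hinj : Function.Injective (Polynomial.map W.f) := Polynomial.map_injective _ W.inj
  apply hinj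
  have ha' : Polynomial.map W.f a ≠ 0 := fun h0 => ha (hinj (by simpa using h0))
  have := congrArg (Polynomial.map W.f) h
  rw [Polynomial.map_mul, Polynomial.map_mul] at this
  exact mul_left_cancel₀ ha' this

theorem S_noZeroDivisors (W : SemidomainWitness S) : NoZeroDivisors S := by
  letI := W.commRing
  letI := W.isDomain
  constructor
  intro a b hab
  have : W.f a * W.f b = 0 := by rw [← map_mul, hab, map_zero]
  rcases mul_eq_zero.mp this with h | h
  · exact Or.inl (W.inj (by simpa using h))
  · exact Or.inr (W.inj (by simpa using h))

end Aux

section Key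

variable {S : Type} [CommSemiring S]

open LaurentPolynomial

theorem key_dichotomy (W : SemidomainWitness S) [Nontrivial S] {p : Polynomial S}
    (hp : Irreducible p) :
    IsUnit (toLaurent p) ∨ Irreducible (toLaurent p) := by
  by_cases hu : IsUnit (toLaurent p)
  · exact Or.inl hu
  right
  haveI : NoZeroDivisors S := S_noZeroDivisors W
  have hXprime : Prime (X : Polynomial S) := by
    refine ⟨X_ne_zero, ?_, ?_⟩
    · intro hX
      obtain ⟨c, hc⟩ := hX.exists_right_inv
      have := congrArg (fun q => Polynomial.coeff q 0) hc
      simp [Polynomial.mul_coeff_zero] at this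
    · intro q r hqr
      rw [Polynomial.X_dvd_iff] at hqr ⊢
      rw [Polynomial.X_dvd_iff]
      rw [Polynomial.mul_coeff_zero] at hqr
      exact mul_eq_zero.mp hqr
  -- main claim by induction on N
  have main : ∀ N : ℕ, ∀ q r : Polynomial S, p * X ^ N = q * r →
      IsUnit (toLaurent q) ∨ IsUnit (toLaurent r) := by
    intro N
    induction N with
    | zero =>
      intro q r hqr
      rw [pow_zero, mul_one] at hqr
      rcases hp.isUnit_or_isUnit hqr with h | h
      · exact Or.inl (h.map toLaurent)
      · exact Or.inr (h.map toLaurent)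
    | succ N ih =>
      intro q r hqr
      have hXdvd : (X : Polynomial S) ∣ q * r := by
        rw [← hqr]
        exact ⟨p * X ^ N, by ring⟩
      rcases hXprime.2.2 q r hXdvd with ⟨q₁, rfl⟩ | ⟨r₁, rfl⟩
      · have hc : X * (p * X ^ N) = X * (q₁ * r) := by
          rw [show X * (p * X ^ N) = p * X ^ (N + 1) by ring, hqr]; ring
        have := polyCancel W _ _ _ X_ne_zero hc
        rcases ih q₁ r this with h | h
        · left
          rw [map_mul, Polynomial.toLaurent_X]
          exact (isUnit_T 1).mul h
        · exact Or.inr h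
      · have hc : X * (p * X ^ N) = X * (q * r₁) := by
          rw [show X * (p * X ^ N) = p * X ^ (N + 1) by ring, hqr]; ring
        have := polyCancel W _ _ _ X_ne_zero hc
        rcases ih q r₁ this with h | h
        · exact Or.inl h
        · right
          rw [map_mul, Polynomial.toLaurent_X]
          exact (isUnit_T 1).mul h
  refine ⟨hu, ?_⟩
  intro a b hab
  obtain ⟨na, q, hq⟩ := exists_T_pow a
  obtain ⟨nb, r, hr⟩ := exists_T_pow b
  have heq : toLaurent (p * X ^ (na + nb)) = toLaurent (q * r) := by
    rw [map_mul, map_mul, Polynomial.toLaurent_X_pow, hq, hr, hab]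
    push_cast [T_add]
    ring
  have := Polynomial.toLaurent_injective heq
  rcases main (na + nb) q r this with h | h
  · left
    have ha : a = toLaurent q * T (-(na : ℤ)) := by
      rw [hq, mul_assoc, ← T_add]
      simp
    rw [ha]
    exact h.mul (isUnit_T _)
  · right
    have hb : b = toLaurent r * T (-(nb : ℤ)) := by
      rw [hr, mul_assoc, ← T_add]
      simp
    rw [hb]
    exact h.mul (isUnit_T _)

/-- Split a multiset of units-or-irreducibles into a unit and the irreducible part. -/
theorem split_multiset {M : Type} [CommMonoidWithZero M] (m : Multiset M)
    (hm : ∀ b ∈ m, IsUnit b ∨ Irreducible b) :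
    ∃ (u : M) (l : Multiset M), IsUnit u ∧ (∀ b ∈ l, Irreducible b) ∧ m.prod = u * l.prod := by
  induction m using Multiset.induction with
  | empty => exact ⟨1, 0, isUnit_one, by simp, by simp⟩
  | cons a m ih =>
    obtain ⟨u, l, hu, hl, hprod⟩ := ih (fun b hb => hm b (Multiset.mem_cons_of_mem hb))
    rcases hm a (Multiset.mem_cons_self a m) with ha | ha
    · exact ⟨a * u, l, ha.mul hu, hl, by rw [Multiset.prod_cons, hprod, mul_assoc]⟩
    · refine ⟨u, a ::ₘ l, hu, ?_, ?_⟩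
      · intro b hb
        rcases Multiset.mem_cons.mp hb with rfl | hb
        · exact ha
        · exact hl b hb
      · rw [Multiset.prod_cons, Multiset.prod_cons, hprod, mul_left_comm]

end Key

open LaurentPolynomial

/-- For a semidomain `S`: if the polynomial semidomain `S[x]` is atomic, then the Laurent
polynomial semidomain `S[x^{±1}]` is atomic. -/
theorem stmt6 (S : Type) [CommSemiring S] (hS : IsSemidomain S)
    (h : Atomic (Polynomial S)) : Atomic (LaurentPolynomial S) := by
  obtain ⟨W⟩ := hS
  intro f hf0 hfu
  rcases subsingleton_or_nontrivial S with hsub | hnt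
  · haveI : Subsingleton (LaurentPolynomial S) := by
      constructor; intro a b; ext n; exact Subsingleton.elim _ _
    exact absurd (Subsingleton.elim f 0) hf0
  obtain ⟨N, p, hp⟩ := exists_T_pow f
  have hpne : p ≠ 0 := by
    intro h0
    apply hf0
    have hz : f * T (N : ℤ) = 0 := by rw [← hp, h0, map_zero]
    have hT := isUnit_T (R := S) (N : ℤ)
    obtain ⟨v, hv⟩ := hT.exists_right_inv
    calc f = f * (T (N : ℤ) * v) := by rw [hv, mul_one]
    _ = 0 := by rw [← mul_assoc, hz, zero_mul]
  have hpnu : ¬ IsUnit p := by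
    intro hup
    apply hfu
    have hfe : f = toLaurent p * T (-(N : ℤ)) := by
      rw [hp, mul_assoc, ← T_add]
      simp
    rw [hfe]
    exact (hup.map toLaurent).mul (isUnit_T _)
  obtain ⟨l, hl, hlprod⟩ := h p hpne hpnu
  have hmap : ∀ b ∈ l.map toLaurent, IsUnit b ∨ Irreducible b := by
    intro b hb
    obtain ⟨q, hq, rfl⟩ := Multiset.mem_map.mp hb
    exact key_dichotomy W (hl q hq)
  obtain ⟨u, l', hu, hl', hprod⟩ := split_multiset _ hmap
  have hfprod : f = (T (-(N : ℤ)) * u) * l'.prod := by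
    have h1 : f = toLaurent p * T (-(N : ℤ)) := by
      rw [hp, mul_assoc, ← T_add]; simp
    have h2 : toLaurent p = u * l'.prod := by
      rw [← hlprod, ← hprod, Multiset.prod_hom l toLaurent]
    rw [h1, h2]; ring
  have huT : IsUnit (T (-(N : ℤ)) * u : LaurentPolynomial S) := (isUnit_T _).mul hu
  rcases Multiset.empty_or_exists_mem l' with rfl | ⟨c, hc⟩
  · exfalso
    apply hfu
    rw [hfprod]
    simpa using huT
  · obtain ⟨l'', rfl⟩ := Multiset.exists_cons_of_mem hc
    refine ⟨(T (-(N : ℤ)) * u * c) ::ₘ l'', ?_, ?_⟩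
    · intro b hb
      rcases Multiset.mem_cons.mp hb with rfl | hb
      · obtain ⟨v, hv⟩ := huT
        rw [← hv]
        exact (irreducible_units_mul v).mpr (hl' c hc)
      · exact hl' b (Multiset.mem_cons_of_mem hb)
    · rw [Multiset.prod_cons, hfprod, Multiset.prod_cons]
      ring
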